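/- Let n ≥ 1, s ∈ (0,1), 0 < λ ≤ Λ, x₀ ∈ ℝⁿ, R > 0, and let u : ℝⁿ → ℝ be a continuous function with u⁻ ∈ L¹_s(ℝⁿ) and u ≥ 0 in the ball B_R(x₀). Let S be a set compactly contained in B_R(x₀) and set d₀ = dist(S, ∂B_R(x₀)) > 0. Then there exists a constant C̃ > 0, depending only on n, s, Λ, d₀ and sup_{x∈S}|x|, such that for every x ∈ S and every admissible kernel μ, the (well-defined, since the integrand is nonnegative) integral L_μ u⁻(x) = (1−s)∫_{ℝⁿ}(u⁻(x+y)+u⁻(x−y)−2u⁻(x)) μ(y/|y|) |y|^{−(n+2s)} dy satisfies L_μ u⁻(x) ≤ C̃ ‖u⁻‖_{L¹_s(ℝⁿ)}; consequently 𝓜⁺[u⁻](x) ≤ C̃ ‖u⁻‖_{L¹_s(ℝⁿ)} for all x ∈ S. -/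

import Mathlib

open MeasureTheory Metric Set Filter RealInnerProductSpace

noncomputable section

/-- Euclidean space ℝⁿ. -/
abbrev Eu (n : ℕ) := EuclideanSpace ℝ (Fin n)

/-- A kernel `μ` in the class `𝓛_*`: measurable, with values in `[λ, Λ]` on the unit
sphere, and even. -/
def IsAdmissibleKernel (n : ℕ) (lam Lam : ℝ) (μ : Eu n → ℝ) : Prop :=
  Measurable μ ∧ (∀ θ : Eu n, ‖θ‖ = 1 → μ θ ∈ Set.Icc lam Lam) ∧ ∀ θ : Eu n, μ (-θ) = μ θ

/-- The integrand `(u(x+y) + u(x−y) − 2u(x)) μ(y/|y|) |y|^{−(n+2s)}`. -/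
def kernIntegrand (n : ℕ) (s : ℝ) (μ u : Eu n → ℝ) (x y : Eu n) : ℝ :=
  (u (x + y) + u (x - y) - 2 * u x) * μ (‖y‖⁻¹ • y) / ‖y‖ ^ ((n : ℝ) + 2 * s)

/-- The linear nonlocal operator `L_μ u(x)`. -/
def Lop (n : ℕ) (s : ℝ) (μ u : Eu n → ℝ) (x : Eu n) : ℝ :=
  (1 - s) * ∫ y, kernIntegrand n s μ u x y

/-- The Pucci extremal operator `𝓜⁺`. -/
def PucciSup (n : ℕ) (s lam Lam : ℝ) (u : Eu n → ℝ) (x : Eu n) : ℝ :=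
  ⨆ μ : {μ : Eu n → ℝ // IsAdmissibleKernel n lam Lam μ}, Lop n s μ.1 u x

/-- The Pucci extremal operator `𝓜⁻`. -/
def PucciInf (n : ℕ) (s lam Lam : ℝ) (u : Eu n → ℝ) (x : Eu n) : ℝ :=
  ⨅ μ : {μ : Eu n → ℝ // IsAdmissibleKernel n lam Lam μ}, Lop n s μ.1 u x

/-- Membership in `L¹_s(ℝⁿ)`. -/
def MemL1s (n : ℕ) (s : ℝ) (u : Eu n → ℝ) : Prop :=
  Integrable (fun x : Eu n => |u x| / (1 + ‖x‖ ^ ((n : ℝ) + 2 * s)))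

/-- The weighted norm `‖u‖_{L¹_s(ℝⁿ)}`. -/
def L1sNorm (n : ℕ) (s : ℝ) (u : Eu n → ℝ) : ℝ :=
  ∫ x : Eu n, |u x| / (1 + ‖x‖ ^ ((n : ℝ) + 2 * s))

/-- Viscosity supersolution `𝓜⁻[u] ≤ g` in `Ω` (the function `g` may incorporate
zeroth-order terms evaluated at `(x, u(x))`): every `C²` test function in `L¹_s`
touching `u` from below at a point of `Ω` satisfies `𝓜⁻[φ](x) ≤ g(x)`. -/
def ViscSupersol (n : ℕ) (s lam Lam : ℝ) (Ω : Set (Eu n)) (u g : Eu n → ℝ) : Prop :=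
  ∀ x ∈ Ω, ∀ φ : Eu n → ℝ, MemL1s n s φ → ContDiffAt ℝ 2 φ x →
    φ x = u x → (∀ y, φ y ≤ u y) → PucciInf n s lam Lam φ x ≤ g x

/-- Viscosity subsolution `𝓜⁻[u] ≥ g` in `Ω`. -/
def ViscSubsol (n : ℕ) (s lam Lam : ℝ) (Ω : Set (Eu n)) (u g : Eu n → ℝ) : Prop :=
  ∀ x ∈ Ω, ∀ φ : Eu n → ℝ, MemL1s n s φ → ContDiffAt ℝ 2 φ x →
    φ x = u x → (∀ y, u y ≤ φ y) → g x ≤ PucciInf n s lam Lam φ x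

set_option maxHeartbeats 1000000 in
/-- Proposition 3.1: if `u ≥ 0` in `B_R(x₀)` and `S ⋐ B_R(x₀)` with
`d₀ = dist(S, ∂B_R(x₀)) > 0`, then `L_μ u⁻(x) ≤ C̃ ‖u⁻‖_{L¹_s}` for every `x ∈ S` and
every admissible kernel `μ` (the integral has nonnegative integrand, so it is taken in
`[0,∞]`); consequently `𝓜⁺[u⁻](x) ≤ C̃ ‖u⁻‖_{L¹_s}` on `S`. -/
theorem stmt4 (n : ℕ) (hn : 1 ≤ n) (s lam Lam : ℝ) (hs : s ∈ Set.Ioo (0:ℝ) 1)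
    (hlam : 0 < lam) (hlamLam : lam ≤ Lam)
    (x₀ : Eu n) (R : ℝ) (hR : 0 < R)
    (u : Eu n → ℝ) (hu : Continuous u)
    (huL1 : MemL1s n s (fun z => max (-u z) 0))
    (hnonneg : ∀ x ∈ Metric.ball x₀ R, 0 ≤ u x)
    (S : Set (Eu n)) (hS : S ⊆ Metric.ball x₀ R)
    (hScomp : IsCompact (closure S)) (hScl : closure S ⊆ Metric.ball x₀ R)
    (d₀ : ℝ) (hd₀pos : 0 < d₀)
    (hd₀ : ∀ x ∈ S, ∀ z ∈ Metric.sphere x₀ R, d₀ ≤ dist x z) :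
    ∃ Ct > 0, ∀ x ∈ S,
      (∀ μ : Eu n → ℝ, IsAdmissibleKernel n lam Lam μ →
        ENNReal.ofReal (1 - s) *
            ∫⁻ y, ENNReal.ofReal (kernIntegrand n s μ (fun z => max (-u z) 0) x y) ≤
          ENNReal.ofReal (Ct * L1sNorm n s (fun z => max (-u z) 0))) ∧
      PucciSup n s lam Lam (fun z => max (-u z) 0) x ≤
        Ct * L1sNorm n s (fun z => max (-u z) 0) := by
  set w : Eu n → ℝ := fun z => max (-u z) 0 with hwdef
  obtain ⟨hs0, hs1⟩ := hs
  have hp : (0:ℝ) < (n : ℝ) + 2 * s := by positivity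
  set p : ℝ := (n : ℝ) + 2 * s with hpdef
  have hLampos : 0 < Lam := lt_of_lt_of_le hlam hlamLam
  -- basic facts about w
  have hwnn : ∀ z, 0 ≤ w z := fun z => le_max_right _ _
  have hwc : Continuous w := hu.neg.max continuous_const
  have hw0 : ∀ z ∈ Metric.ball x₀ R, w z = 0 := fun z hz =>
    max_eq_right (neg_nonpos.mpr (hnonneg z hz))
  -- bound M on ‖x‖ for x ∈ S
  obtain ⟨M0, hM0⟩ := isBounded_iff_forall_norm_le.mp hScomp.isBounded
  set M : ℝ := max M0 0 with hMdef
  have hMnn : 0 ≤ M := le_max_right _ _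
  have hM : ∀ x ∈ S, ‖x‖ ≤ M := fun x hx =>
    le_trans (hM0 x (subset_closure hx)) (le_max_left _ _)
  -- the constant
  set C₁ : ℝ := d₀ ^ (-p) + (1 + M / d₀) ^ p with hC₁def
  have hC₁ : 0 < C₁ := by positivity
  have hCtpos : 0 < 2 * Lam * C₁ := by positivity
  -- the auxiliary function g
  set g : Eu n → ℝ := fun z => w z / (1 + ‖z‖ ^ p) with hgdef
  have hgnn : ∀ z, 0 ≤ g z := fun z => div_nonneg (hwnn z) (by positivity)
  have hgc : Continuous g := by
    rw [hgdef]
    exact hwc.div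
      (continuous_const.add (continuous_norm.rpow_const fun z => Or.inr hp.le))
      (fun z => by positivity)
  have hg_eq : (fun z : Eu n => |w z| / (1 + ‖z‖ ^ p)) = g := by
    funext z; rw [hgdef, abs_of_nonneg (hwnn z)]
  have hg_int : Integrable g := by rw [← hg_eq]; exact huL1
  have hNnn : 0 ≤ L1sNorm n s w :=
    integral_nonneg fun z => div_nonneg (abs_nonneg _) (by positivity)
  have hgl : ∫⁻ z, ENNReal.ofReal (g z) = ENNReal.ofReal (L1sNorm n s w) := by
    rw [← ofReal_integral_eq_lintegral_ofReal hg_int (ae_of_all _ hgnn)]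
    congr 1
    simp only [L1sNorm, ← hpdef, hg_eq]
  -- distance to the sphere
  have hxd : ∀ x ∈ S, dist x x₀ + d₀ ≤ R := by
    intro x hxS
    have hxb : dist x x₀ < R := mem_ball.mp (hS hxS)
    rcases eq_or_ne x x₀ with h | h
    · have he : ‖(EuclideanSpace.single (⟨0, hn⟩ : Fin n) (1:ℝ))‖ = 1 := by
        simp [EuclideanSpace.norm_single]
      set e := EuclideanSpace.single (⟨0, hn⟩ : Fin n) (1:ℝ) with hedef
      have hz : x₀ + R • e ∈ Metric.sphere x₀ R := by
        simp [Metric.mem_sphere, dist_eq_norm, norm_smul, he, abs_of_pos hR]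
      have h1 := hd₀ x hxS _ hz
      have h2 : dist x (x₀ + R • e) = R := by
        subst h; simp [dist_eq_norm, norm_smul, he, abs_of_pos hR]
      rw [h2] at h1
      have h3 : dist x x₀ = 0 := by rw [h, dist_self]
      linarith
    · set t := dist x x₀ with htdef
      have ht : 0 < t := dist_pos.mpr h
      have htn : ‖x - x₀‖ = t := by rw [← dist_eq_norm]
      have hz : x₀ + (R / t) • (x - x₀) ∈ Metric.sphere x₀ R := by
        rw [Metric.mem_sphere, dist_eq_norm]
        rw [show x₀ + (R / t) • (x - x₀) - x₀ = (R / t) • (x - x₀) by abel]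
        rw [norm_smul, htn, Real.norm_eq_abs, abs_of_pos (by positivity)]
        field_simp
      have h1 := hd₀ x hxS _ hz
      have h2 : dist x (x₀ + (R / t) • (x - x₀)) = R - t := by
        rw [dist_eq_norm]
        rw [show x - (x₀ + (R / t) • (x - x₀)) = (1 - R / t) • (x - x₀) by
          rw [sub_smul, one_smul]; abel]
        rw [norm_smul, htn, Real.norm_eq_abs]
        have hRt : 1 ≤ R / t := (one_le_div ht).mpr hxb.le
        rw [abs_of_nonpos (by linarith)]
        field_simp
        ring
      rw [h2] at h1
      linarith
  -- for small y, w vanishes at x ± y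
  have hdist : ∀ x ∈ S, ∀ y : Eu n, ‖y‖ < d₀ → w (x + y) = 0 ∧ w (x - y) = 0 := by
    intro x hxS y hy
    have h1 := hxd x hxS
    constructor <;> refine hw0 _ (mem_ball.mpr ?_)
    · calc dist (x + y) x₀ ≤ dist (x + y) x + dist x x₀ := dist_triangle _ _ _
        _ < d₀ + (R - d₀) := by
            have h2 : dist (x + y) x = ‖y‖ := by simp [dist_eq_norm]
            rw [h2]; linarith
        _ = R := by ring
    · calc dist (x - y) x₀ ≤ dist (x - y) x + dist x x₀ := dist_triangle _ _ _
        _ < d₀ + (R - d₀) := by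
            have h2 : dist (x - y) x = ‖y‖ := by
              rw [dist_eq_norm, show x - y - x = -y by abel, norm_neg]
            rw [h2]; linarith
        _ = R := by ring
  refine ⟨2 * Lam * C₁, hCtpos, ?_⟩
  intro x hxS
  have hwx : w x = 0 := hw0 x (hS hxS)
  have hMx : ‖x‖ ≤ M := hM x hxS
  -- comparison of kernels
  have hcomp : ∀ z : Eu n, d₀ ≤ ‖z - x‖ → 1 / ‖z - x‖ ^ p ≤ C₁ / (1 + ‖z‖ ^ p) := by
    intro z hz
    have hr : 0 < ‖z - x‖ := lt_of_lt_of_le hd₀pos hz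
    have h1 : ‖z‖ ≤ ‖z - x‖ * (1 + M / d₀) := by
      have ha : ‖z‖ ≤ ‖z - x‖ + ‖x‖ := by
        calc ‖z‖ = ‖z - x + x‖ := by rw [sub_add_cancel]
          _ ≤ ‖z - x‖ + ‖x‖ := norm_add_le _ _
      have hb : ‖x‖ ≤ M / d₀ * ‖z - x‖ := by
        calc ‖x‖ ≤ M := hMx
          _ = M / d₀ * d₀ := by field_simp
          _ ≤ M / d₀ * ‖z - x‖ := by gcongr
      nlinarith
    have h3 : ‖z‖ ^ p ≤ (1 + M / d₀) ^ p * ‖z - x‖ ^ p := by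
      calc ‖z‖ ^ p ≤ (‖z - x‖ * (1 + M / d₀)) ^ p :=
            Real.rpow_le_rpow (norm_nonneg _) h1 hp.le
        _ = ‖z - x‖ ^ p * (1 + M / d₀) ^ p := Real.mul_rpow hr.le (by positivity)
        _ = (1 + M / d₀) ^ p * ‖z - x‖ ^ p := mul_comm _ _
    have h4 : (1:ℝ) ≤ d₀ ^ (-p) * ‖z - x‖ ^ p := by
      have hd : d₀ ^ p ≤ ‖z - x‖ ^ p := Real.rpow_le_rpow hd₀pos.le hz hp.le
      have hdd : d₀ ^ (-p) * d₀ ^ p = 1 := by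
        rw [← Real.rpow_add hd₀pos]; simp
      calc (1:ℝ) = d₀ ^ (-p) * d₀ ^ p := hdd.symm
        _ ≤ d₀ ^ (-p) * ‖z - x‖ ^ p := by gcongr
    have h5 : 1 + ‖z‖ ^ p ≤ C₁ * ‖z - x‖ ^ p := by
      calc 1 + ‖z‖ ^ p ≤ d₀ ^ (-p) * ‖z - x‖ ^ p + (1 + M / d₀) ^ p * ‖z - x‖ ^ p :=
            add_le_add h4 h3
        _ = C₁ * ‖z - x‖ ^ p := by rw [hC₁def]; ring
    rw [div_le_div_iff₀ (by positivity) (by positivity)]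
    linarith
  -- pointwise bound on the integrand
  have hpoint : ∀ μ : Eu n → ℝ, IsAdmissibleKernel n lam Lam μ → ∀ y : Eu n,
      kernIntegrand n s μ w x y ≤ Lam * C₁ * (g (x + y) + g (x - y)) := by
    intro μ hμ y
    rcases lt_or_ge ‖y‖ d₀ with hy | hy
    · obtain ⟨h1, h2⟩ := hdist x hxS y hy
      have hz : kernIntegrand n s μ w x y = 0 := by
        simp [kernIntegrand, h1, h2, hwx]
      rw [hz]
      have := add_nonneg (hgnn (x + y)) (hgnn (x - y))
      positivity
    · have hy0 : y ≠ 0 := by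
        intro h; rw [h, norm_zero] at hy; linarith
      have hunit : ‖‖y‖⁻¹ • y‖ = 1 := by
        rw [norm_smul, Real.norm_eq_abs, abs_of_nonneg (inv_nonneg.mpr (norm_nonneg y)),
          inv_mul_cancel₀ (norm_ne_zero_iff.mpr hy0)]
      obtain ⟨hm1, hm2⟩ := hμ.2.1 _ hunit
      have hrpos : (0:ℝ) < ‖y‖ ^ p := Real.rpow_pos_of_pos (lt_of_lt_of_le hd₀pos hy) _
      have hA := hcomp (x + y) (by rw [add_sub_cancel_left]; exact hy)
      have hB := hcomp (x - y) (by rw [show x - y - x = -y by abel, norm_neg]; exact hy)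
      rw [add_sub_cancel_left] at hA
      rw [show x - y - x = -y by abel, norm_neg] at hB
      have hAq : (0:ℝ) < 1 + ‖x + y‖ ^ p := by positivity
      have hBq : (0:ℝ) < 1 + ‖x - y‖ ^ p := by positivity
      have ha := hwnn (x + y)
      have hb := hwnn (x - y)
      simp only [kernIntegrand, hwx, mul_zero, sub_zero, ← hpdef]
      rw [hgdef]
      simp only
      calc (w (x + y) + w (x - y)) * μ (‖y‖⁻¹ • y) / ‖y‖ ^ p
          ≤ (w (x + y) + w (x - y)) * Lam / ‖y‖ ^ p := by
            gcongr
        _ = Lam * (w (x + y) * (1 / ‖y‖ ^ p) + w (x - y) * (1 / ‖y‖ ^ p)) := by ring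
        _ ≤ Lam * (w (x + y) * (C₁ / (1 + ‖x + y‖ ^ p)) +
              w (x - y) * (C₁ / (1 + ‖x - y‖ ^ p))) := by
            have hL : (0:ℝ) ≤ Lam := hLampos.le
            gcongr
        _ = Lam * C₁ * (w (x + y) / (1 + ‖x + y‖ ^ p) + w (x - y) / (1 + ‖x - y‖ ^ p)) := by
            ring
  -- nonnegativity of the integrand
  have hknn : ∀ μ : Eu n → ℝ, IsAdmissibleKernel n lam Lam μ → ∀ y : Eu n,
      0 ≤ kernIntegrand n s μ w x y := by
    intro μ hμ y
    rcases lt_or_ge ‖y‖ d₀ with hy | hy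
    · obtain ⟨h1, h2⟩ := hdist x hxS y hy
      simp [kernIntegrand, h1, h2, hwx]
    · have hy0 : y ≠ 0 := by
        intro h; rw [h, norm_zero] at hy; linarith
      have hunit : ‖‖y‖⁻¹ • y‖ = 1 := by
        rw [norm_smul, Real.norm_eq_abs, abs_of_nonneg (inv_nonneg.mpr (norm_nonneg y)),
          inv_mul_cancel₀ (norm_ne_zero_iff.mpr hy0)]
      obtain ⟨hm1, hm2⟩ := hμ.2.1 _ hunit
      simp only [kernIntegrand]
      apply div_nonneg _ (Real.rpow_nonneg (norm_nonneg y) _)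
      apply mul_nonneg _ (le_trans hlam.le hm1)
      rw [hwx]
      have := add_nonneg (hwnn (x + y)) (hwnn (x - y))
      linarith
  -- the key lintegral bound
  have hgm1 : Measurable fun y : Eu n => ENNReal.ofReal (g (x + y)) :=
    (hgc.measurable.comp (measurable_const_add x)).ennreal_ofReal
  have hgm2 : Measurable fun y : Eu n => ENNReal.ofReal (g (x - y)) :=
    (hgc.measurable.comp (measurable_const.sub measurable_id)).ennreal_ofReal
  have htrans1 : ∫⁻ y, ENNReal.ofReal (g (x + y)) = ∫⁻ z, ENNReal.ofReal (g z) :=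
    lintegral_add_left_eq_self (fun z => ENNReal.ofReal (g z)) x
  have htrans2 : ∫⁻ y, ENNReal.ofReal (g (x - y)) = ∫⁻ z, ENNReal.ofReal (g z) :=
    (MeasureTheory.Measure.measurePreserving_sub_left volume x).lintegral_comp
      (hgc.measurable.ennreal_ofReal)
  have hLamC : (0:ℝ) ≤ Lam * C₁ := by positivity
  have key : ∀ μ : Eu n → ℝ, IsAdmissibleKernel n lam Lam μ →
      (∫⁻ y, ENNReal.ofReal (kernIntegrand n s μ w x y)) ≤
        ENNReal.ofReal (2 * Lam * C₁ * L1sNorm n s w) := by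
    intro μ hμ
    calc ∫⁻ y, ENNReal.ofReal (kernIntegrand n s μ w x y)
        ≤ ∫⁻ y, ENNReal.ofReal (Lam * C₁ * (g (x + y) + g (x - y))) :=
          lintegral_mono fun y => ENNReal.ofReal_le_ofReal (hpoint μ hμ y)
      _ = ∫⁻ y, ENNReal.ofReal (Lam * C₁) *
            (ENNReal.ofReal (g (x + y)) + ENNReal.ofReal (g (x - y))) := by
          congr 1; funext y
          rw [ENNReal.ofReal_mul hLamC, ENNReal.ofReal_add (hgnn _) (hgnn _)]
      _ = ENNReal.ofReal (Lam * C₁) *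
            ∫⁻ y, (ENNReal.ofReal (g (x + y)) + ENNReal.ofReal (g (x - y))) :=
          lintegral_const_mul' _ _ ENNReal.ofReal_ne_top
      _ = ENNReal.ofReal (Lam * C₁) *
            ((∫⁻ y, ENNReal.ofReal (g (x + y))) + ∫⁻ y, ENNReal.ofReal (g (x - y))) := by
          rw [lintegral_add_left hgm1]
      _ = ENNReal.ofReal (Lam * C₁) *
            (ENNReal.ofReal (L1sNorm n s w) + ENNReal.ofReal (L1sNorm n s w)) := by
          rw [htrans1, htrans2, hgl]
      _ = ENNReal.ofReal (2 * Lam * C₁ * L1sNorm n s w) := by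
          rw [← ENNReal.ofReal_add hNnn hNnn, ← ENNReal.ofReal_mul hLamC]
          congr 1; ring
  -- the Bochner-integral bound
  have hLop : ∀ μ : Eu n → ℝ, IsAdmissibleKernel n lam Lam μ →
      Lop n s μ w x ≤ 2 * Lam * C₁ * L1sNorm n s w := by
    intro μ hμ
    have hkm : Measurable (fun y => kernIntegrand n s μ w x y) := by
      have c1 : Continuous fun y : Eu n => w (x + y) + w (x - y) - 2 * w x :=
        ((hwc.comp (continuous_const.add continuous_id)).add
          (hwc.comp (continuous_const.sub continuous_id))).sub continuous_const
      have m2 : Measurable fun y : Eu n => μ (‖y‖⁻¹ • y) :=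
        hμ.1.comp (measurable_norm.inv.smul measurable_id)
      have c3 : Continuous fun y : Eu n => ‖y‖ ^ ((n : ℝ) + 2 * s) :=
        continuous_norm.rpow_const fun z => Or.inr hp.le
      exact ((c1.measurable.mul m2).div c3.measurable)
    have hInt := integral_eq_lintegral_of_nonneg_ae (μ := volume)
      (ae_of_all _ (hknn μ hμ)) hkm.aestronglyMeasurable
    have h1 : ∫ y, kernIntegrand n s μ w x y ≤ 2 * Lam * C₁ * L1sNorm n s w := by
      rw [hInt]
      exact ENNReal.toReal_le_of_le_ofReal (by positivity) (key μ hμ)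
    have h0 : 0 ≤ ∫ y, kernIntegrand n s μ w x y := integral_nonneg (hknn μ hμ)
    simp only [Lop]
    calc (1 - s) * ∫ y, kernIntegrand n s μ w x y
        ≤ 1 * ∫ y, kernIntegrand n s μ w x y := by
          apply mul_le_mul_of_nonneg_right (by linarith) h0
      _ = ∫ y, kernIntegrand n s μ w x y := one_mul _
      _ ≤ _ := h1
  refine ⟨fun μ hμ => ?_, ?_⟩
  · calc ENNReal.ofReal (1 - s) * ∫⁻ y, ENNReal.ofReal (kernIntegrand n s μ w x y)
        ≤ 1 * ENNReal.ofReal (2 * Lam * C₁ * L1sNorm n s w) :=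
          mul_le_mul' (ENNReal.ofReal_le_one.mpr (by linarith)) (key μ hμ)
      _ = _ := one_mul _
  · have hne : Nonempty {μ : Eu n → ℝ // IsAdmissibleKernel n lam Lam μ} :=
      ⟨⟨fun _ => lam, measurable_const, fun θ _ => ⟨le_rfl, hlamLam⟩, fun θ => rfl⟩⟩
    exact ciSup_le fun μ => hLop μ.1 μ.2
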